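/- Let d be a positive integer, let ρ : ℝ^d → ℝ be a positive function, let ε ∈ (0,1) and C_sg > 0, and suppose ρ satisfies (1-ε)-slow growth with constant C_sg. Then ρ satisfies self-majorization of order r = (1-ε)/ε with constant C_sm = min( 2^{ε-1}/C_sg , (2^{ε-1}/C_sg)^{1/ε} ); that is, for all x, y ∈ ℝ^d, ρ(y) ≥ C_sm · ρ(x) · (1 + |x-y|/ρ(x))^{-(1-ε)/ε}. -/

import Mathlib

open Real

/-- If a positive function `ρ` on `ℝ^d` satisfies `(1-ε)`-slow growth with
constant `C_sg`, then it satisfies self-majorization of order `r = (1-ε)/ε` with constant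
`C_sm = min (2^(ε-1)/C_sg) ((2^(ε-1)/C_sg)^(1/ε))`. -/
theorem slow_growth_implies_self_majorization
    (d : ℕ) (hd : 0 < d) (ρ : EuclideanSpace ℝ (Fin d) → ℝ) (hρ : ∀ x, 0 < ρ x)
    (ε : ℝ) (hε0 : 0 < ε) (hε1 : ε < 1) (Csg : ℝ) (hCsg : 0 < Csg)
    (hsg : ∀ x α, ρ α ≤ Csg * ρ x * (1 + ‖x - α‖ / ρ x) ^ (1 - ε)) :
    ∀ x y, ρ y ≥
      min ((2 : ℝ) ^ (ε - 1) / Csg) (((2 : ℝ) ^ (ε - 1) / Csg) ^ (1 / ε)) *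
        ρ x * (1 + ‖x - y‖ / ρ x) ^ (-((1 - ε) / ε)) := by
  intro x y
  have hApos : 0 < ρ x := hρ x
  have hBpos : 0 < ρ y := hρ y
  set A := ρ x with hA
  set B := ρ y with hB
  set t := ‖x - y‖ with ht
  have htnn : 0 ≤ t := norm_nonneg _
  have h1ε : (0:ℝ) ≤ 1 - ε := by linarith
  have hrneg : -((1 - ε) / ε) ≤ 0 := by
    have : 0 ≤ (1 - ε) / ε := div_nonneg h1ε hε0.le
    linarith
  have key : A ≤ Csg * B * (1 + t / B) ^ (1 - ε) := by
    have h := hsg y x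
    rwa [norm_sub_rev] at h
  set c1 := (2:ℝ) ^ (ε - 1) / Csg with hc1
  have h2pos : (0:ℝ) < 2 := two_pos
  have hc1pos : 0 < c1 := div_pos (rpow_pos_of_pos h2pos _) hCsg
  have hc2pos : 0 < c1 ^ (1/ε) := rpow_pos_of_pos hc1pos _
  have hbase1 : (1:ℝ) ≤ 1 + t / A := le_add_of_nonneg_right (div_nonneg htnn hApos.le)
  have hfac_le_one : (1 + t / A) ^ (-((1 - ε) / ε)) ≤ 1 :=
    Real.rpow_le_one_of_one_le_of_nonpos hbase1 hrneg
  have hfac_pos : 0 < (1 + t / A) ^ (-((1 - ε) / ε)) :=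
    rpow_pos_of_pos (by linarith) _
  have h2pow : (2:ℝ) ^ (ε - 1) * 2 ^ (1 - ε) = 1 := by
    rw [← Real.rpow_add h2pos]
    norm_num
  rcases le_or_gt t B with hcase | hcase
  · -- t ≤ B
    have h2 : (1 + t / B) ^ (1 - ε) ≤ 2 ^ (1 - ε) := by
      apply Real.rpow_le_rpow (by positivity) ?_ h1ε
      have : t / B ≤ 1 := (div_le_one hBpos).mpr hcase
      linarith
    have hAB : A ≤ Csg * 2 ^ (1 - ε) * B := by
      calc A ≤ Csg * B * (1 + t / B) ^ (1 - ε) := key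
        _ ≤ Csg * B * 2 ^ (1 - ε) := by
            apply mul_le_mul_of_nonneg_left h2 (by positivity)
        _ = Csg * 2 ^ (1 - ε) * B := by ring
    have hBge : c1 * A ≤ B := by
      have hmul := mul_le_mul_of_nonneg_left hAB
        (le_of_lt (rpow_pos_of_pos h2pos (ε - 1)))
      have heq : (2:ℝ) ^ (ε - 1) * (Csg * 2 ^ (1 - ε) * B) = Csg * B := by
        linear_combination (Csg * B) * h2pow
      rw [heq] at hmul
      rw [hc1, div_mul_eq_mul_div, div_le_iff₀ hCsg]
      linarith
    calc min c1 (c1 ^ (1/ε)) * A * (1 + t / A) ^ (-((1 - ε) / ε))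
        ≤ c1 * A * 1 := by
          apply mul_le_mul
          · apply mul_le_mul_of_nonneg_right (min_le_left _ _) hApos.le
          · exact hfac_le_one
          · exact hfac_pos.le
          · positivity
      _ = c1 * A := mul_one _
      _ ≤ B := hBge
  · -- B < t
    have htpos : 0 < t := lt_trans hBpos hcase
    have htpow : t ^ (ε - 1) * t ^ (1 - ε) = 1 := by
      rw [← Real.rpow_add htpos]
      norm_num
    have h2 : (1 + t / B) ^ (1 - ε) ≤ (2 * t / B) ^ (1 - ε) := by
      apply Real.rpow_le_rpow (by positivity) ?_ h1ε
      have h1 : (1:ℝ) ≤ t / B := (one_le_div hBpos).mpr hcase.le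
      have : 2 * t / B = t / B + t / B := by ring
      rw [this]; linarith
    have hstep : A ≤ (Csg * 2 ^ (1 - ε) * t ^ (1 - ε)) * B ^ ε := by
      have hdiv : (2 * t / B) ^ (1 - ε) = (2 * t) ^ (1 - ε) / B ^ (1 - ε) :=
        Real.div_rpow (by positivity) hBpos.le _
      have hBε : B ^ ε = B / B ^ (1 - ε) := by
        rw [eq_div_iff (ne_of_gt (rpow_pos_of_pos hBpos _)), ← Real.rpow_add hBpos]
        norm_num
      have h2t : (2 * t) ^ (1 - ε) = 2 ^ (1 - ε) * t ^ (1 - ε) :=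
        Real.mul_rpow (by norm_num) htnn
      calc A ≤ Csg * B * (1 + t / B) ^ (1 - ε) := key
        _ ≤ Csg * B * (2 * t / B) ^ (1 - ε) := by
            apply mul_le_mul_of_nonneg_left h2 (by positivity)
        _ = (Csg * 2 ^ (1 - ε) * t ^ (1 - ε)) * B ^ ε := by
            rw [hdiv, hBε, h2t]; ring
    have hεpow : c1 * A * t ^ (ε - 1) ≤ B ^ ε := by
      have hcpos : 0 < c1 * t ^ (ε - 1) := by positivity
      have hmul := mul_le_mul_of_nonneg_left hstep hcpos.le
      have hone : (c1 * t ^ (ε - 1)) * (Csg * 2 ^ (1 - ε) * t ^ (1 - ε)) = 1 := by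
        rw [hc1]
        have hre : (2:ℝ) ^ (ε - 1) / Csg * t ^ (ε - 1) * (Csg * 2 ^ (1 - ε) * t ^ (1 - ε))
            = (2 ^ (ε - 1) * 2 ^ (1 - ε)) * (t ^ (ε - 1) * t ^ (1 - ε)) * (Csg / Csg) := by
          ring
        rw [hre, h2pow, htpow, div_self hCsg.ne']
        norm_num
      calc c1 * A * t ^ (ε - 1) = (c1 * t ^ (ε - 1)) * A := by ring
        _ ≤ (c1 * t ^ (ε - 1)) * ((Csg * 2 ^ (1 - ε) * t ^ (1 - ε)) * B ^ ε) := hmul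
        _ = ((c1 * t ^ (ε - 1)) * (Csg * 2 ^ (1 - ε) * t ^ (1 - ε))) * B ^ ε := by
            ring
        _ = B ^ ε := by rw [hone, one_mul]
    have hpow := Real.rpow_le_rpow (by positivity) hεpow
      (by positivity : (0:ℝ) ≤ 1/ε)
    have hR : (B ^ ε) ^ (1/ε) = B := by
      rw [← Real.rpow_mul hBpos.le, mul_one_div, div_self hε0.ne', Real.rpow_one]
    have hL : (c1 * A * t ^ (ε - 1)) ^ (1/ε)
        = c1 ^ (1/ε) * A ^ (1/ε) * t ^ ((ε - 1) / ε) := by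
      rw [Real.mul_rpow (by positivity) (by positivity),
        Real.mul_rpow hc1pos.le hApos.le, ← Real.rpow_mul htnn, mul_one_div]
    rw [hL, hR] at hpow
    -- now handle the target side
    have hexp : -((1 - ε) / ε) = (ε - 1) / ε := by ring
    have hAfac : A * (1 + t / A) ^ ((ε - 1) / ε)
        = A ^ (1/ε) * (A + t) ^ ((ε - 1) / ε) := by
      have h1 : 1 + t / A = (A + t) / A := by field_simp
      have h2' : ((A + t) / A) ^ ((ε - 1) / ε)
          = (A + t) ^ ((ε - 1) / ε) / A ^ ((ε - 1) / ε) :=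
        Real.div_rpow (by positivity) hApos.le _
      have h3 : A / A ^ ((ε - 1) / ε) = A ^ (1/ε) := by
        rw [show (1:ℝ)/ε = 1 - (ε - 1)/ε by field_simp; ring,
          Real.rpow_sub hApos, Real.rpow_one]
      rw [h1, h2', ← h3]; ring
    have htfac : (A + t) ^ ((ε - 1) / ε) ≤ t ^ ((ε - 1) / ε) := by
      rw [← hexp]
      exact Real.rpow_le_rpow_of_nonpos htpos (by linarith) hrneg
    calc min c1 (c1 ^ (1/ε)) * A * (1 + t / A) ^ (-((1 - ε) / ε))
        ≤ c1 ^ (1/ε) * (A * (1 + t / A) ^ (-((1 - ε) / ε))) := by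
          rw [mul_assoc]
          apply mul_le_mul_of_nonneg_right (min_le_right _ _) (by positivity)
      _ = c1 ^ (1/ε) * (A ^ (1/ε) * (A + t) ^ ((ε - 1) / ε)) := by
          rw [hexp, hAfac]
      _ ≤ c1 ^ (1/ε) * (A ^ (1/ε) * t ^ ((ε - 1) / ε)) := by
          apply mul_le_mul_of_nonneg_left ?_ hc2pos.le
          exact mul_le_mul_of_nonneg_left htfac (by positivity)
      _ = c1 ^ (1/ε) * A ^ (1/ε) * t ^ ((ε - 1) / ε) := by ring
      _ ≤ B := hpow
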